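/- Failure of Comprehension: for every complete Heyting algebra A with 0 ≠ 1, the truth value of the sentence asserting the existence of a universal set is zero in the name universe: ‖∃x∀y(y ∈ x)‖ = 0, i.e. ⨆_{u ∈ V^A} ⨅_{v ∈ V^A} ‖v ∈ u‖ = 0; hence the unrestricted Comprehension scheme is not valid in V^A. -/

import Mathlib

universe u

/-- The universe `V^A` of `A`-names over a complete Heyting algebra `A`:
an `A`-name is a function from a set (of previously constructed `A`-names)
into `A`, here encoded by an indexing type `ι`, a family `elts` of names and
the family `val` of their attached truth values. -/
inductive HName (A : Type u) : Type (u + 1) where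
  | mk (ι : Type u) (elts : ι → HName A) (val : ι → A)

namespace HName

variable {A : Type u}

/-- The indexing type of (the domain of) a name. -/
def ι : HName A → Type u
  | mk ι _ _ => ι

/-- The members of (the domain of) a name. -/
def elts : (u : HName A) → u.ι → HName A
  | mk _ e _ => e

/-- The values attached by a name to the members of its domain. -/
def val : (u : HName A) → u.ι → A
  | mk _ _ v => v

/-- Ordinal rank of a name (used for the recursive definition of truth values). -/
noncomputable def rank : HName A → Ordinal.{u}
  | mk _ e _ => Ordinal.lsub fun i => (e i).rank

theorem rank_lt {ι : Type u} (e : ι → HName A) (v : ι → A) (i : ι) :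
    (e i).rank < (mk ι e v).rank := Ordinal.lt_lsub _ i

variable [Order.Frame A]

/-- The truth value `‖u ≈ v‖` of equality of two names, defined by the recursion
`‖u ≈ v‖ = ⨅_{x ∈ dom u} (u(x) ⇨ ‖x ∈ v‖) ⊓ ⨅_{y ∈ dom v} (v(y) ⇨ ‖y ∈ u‖)`,
where `‖x ∈ v‖ = ⨆_{y ∈ dom v} (v(y) ⊓ ‖y ≈ x‖)` is inlined. -/
noncomputable def eqVal : HName A → HName A → A
  | mk ι e a, mk κ f b =>
      (⨅ i, a i ⇨ ⨆ j, b j ⊓ eqVal (f j) (e i)) ⊓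
      (⨅ j, b j ⇨ ⨆ i, a i ⊓ eqVal (e i) (f j))
termination_by u v => max u.rank v.rank
decreasing_by
  · exact max_lt (lt_max_of_lt_right (rank_lt f b j)) (lt_max_of_lt_left (rank_lt e a i))
  · exact max_lt (lt_max_of_lt_left (rank_lt e a i)) (lt_max_of_lt_right (rank_lt f b j))

/-- The truth value `‖u ∈ v‖ = ⨆_{x ∈ dom v} (v(x) ⊓ ‖x ≈ u‖)` of membership. -/
noncomputable def memVal (u v : HName A) : A :=
  ⨆ j : v.ι, v.val j ⊓ eqVal (v.elts j) u

end HName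

namespace HName
variable {A : Type u} [Order.Frame A]

theorem eqVal_mk {ι κ : Type u} (e : ι → HName A) (a : ι → A) (f : κ → HName A) (b : κ → A) :
    eqVal (mk ι e a) (mk κ f b) =
      (⨅ i, a i ⇨ memVal (e i) (mk κ f b)) ⊓ (⨅ j, b j ⇨ memVal (f j) (mk ι e a)) := by
  rw [eqVal]; rfl

theorem memVal_mk {κ : Type u} (u : HName A) (f : κ → HName A) (b : κ → A) :
    memVal u (mk κ f b) = ⨆ j, b j ⊓ eqVal (f j) u := rfl

theorem eqVal_symm (x y : HName A) : eqVal x y = eqVal y x := by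
  obtain ⟨ι, e, a⟩ := x; obtain ⟨κ, f, b⟩ := y
  rw [eqVal_mk, eqVal_mk, inf_comm]
end HName
namespace HName
variable {A : Type u} [Order.Frame A]

private theorem rev3 (p q r : Ordinal.{u}) : ({r, q, p} : Multiset Ordinal.{u}) = {p, q, r} := by
  ext a
  simp only [Multiset.insert_eq_cons, Multiset.count_cons, Multiset.count_singleton]
  split_ifs <;> omega

private theorem perm1 {p q s t : Ordinal.{u}} (h : s < t) :
    Multiset.IsDershowitzMannaLT ({p, q, s} : Multiset Ordinal.{u}) {t, p, q} := by
  refine ⟨{p, q}, {s}, {t}, by simp [Multiset.empty_eq_zero], ?_, ?_, by simpa using h⟩ <;>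
  · ext a
    simp only [Multiset.insert_eq_cons, Multiset.count_cons, Multiset.count_singleton,
      Multiset.count_add] <;>
    split_ifs <;> omega

private theorem dm_two {p q r p' q' : Ordinal.{u}} (hp : p' < p) (hq : q' < q) :
    Multiset.IsDershowitzMannaLT ({q', p', r} : Multiset Ordinal.{u}) {p, q, r} := by
  refine ⟨{r}, {q', p'}, {p, q}, by simp [Multiset.empty_eq_zero], ?_, ?_, ?_⟩
  · ext a
    simp only [Multiset.insert_eq_cons, Multiset.count_cons, Multiset.count_singleton,
      Multiset.count_add]
    split_ifs <;> omega
  · ext a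
    simp only [Multiset.insert_eq_cons, Multiset.count_cons, Multiset.count_singleton,
      Multiset.count_add]
    split_ifs <;> omega
  · intro y hy
    simp only [Multiset.insert_eq_cons, Multiset.mem_cons, Multiset.mem_singleton] at hy
    rcases hy with rfl | rfl
    · exact ⟨q, by simp, hq⟩
    · exact ⟨p, by simp, hp⟩

theorem trans_subst (o : Multiset Ordinal.{u}) : ∀ x y z : HName A,
    ({x.rank, y.rank, z.rank} : Multiset Ordinal.{u}) = o →
    (eqVal x y ⊓ eqVal y z ≤ eqVal x z) ∧ (eqVal x y ⊓ memVal z x ≤ memVal z y) := by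
  induction o using (Multiset.wellFounded_isDershowitzMannaLT (α := Ordinal.{u})).induction with
  | _ o IH =>
  intro x y z ho
  subst ho
  obtain ⟨ι, e, a⟩ := x; obtain ⟨κ, f, b⟩ := y; obtain ⟨μ, g, c⟩ := z
  set X := mk ι e a with hX; set Y := mk κ f b with hY; set Z := mk μ g c with hZ
  have hmemY : ∀ i, eqVal X Y ⊓ a i ≤ memVal (e i) Y := by
    intro i
    have h1 : eqVal X Y ≤ a i ⇨ memVal (e i) Y := by
      conv_lhs => rw [hX, hY, eqVal_mk]
      rw [← hY]; exact inf_le_of_left_le (iInf_le _ i)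
    exact le_himp_iff.1 h1
  constructor
  · -- transitivity
    conv_rhs => rw [hX, hZ, eqVal_mk, ← hX, ← hZ]
    apply le_inf
    · refine le_iInf fun i => ?_
      rw [le_himp_iff]
      have h2 : eqVal Y Z ⊓ memVal (e i) Y ≤ memVal (e i) Z :=
        (IH _ (perm1 (rank_lt e a i)) Y Z (e i) rfl).2
      calc eqVal X Y ⊓ eqVal Y Z ⊓ a i
          = eqVal Y Z ⊓ (eqVal X Y ⊓ a i) := by ac_rfl
        _ ≤ eqVal Y Z ⊓ memVal (e i) Y := inf_le_inf_left _ (hmemY i)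
        _ ≤ memVal (e i) Z := h2
    · refine le_iInf fun k => ?_
      rw [le_himp_iff]
      have h1 : eqVal Y Z ⊓ c k ≤ memVal (g k) Y := by
        have : eqVal Y Z ≤ c k ⇨ memVal (g k) Y := by
          conv_lhs => rw [hY, hZ, eqVal_mk]
          rw [← hY]; exact inf_le_of_right_le (iInf_le _ k)
        exact le_himp_iff.1 this
      have h2 : eqVal Y X ⊓ memVal (g k) Y ≤ memVal (g k) X := by
        refine (IH _ ?_ Y X (g k) rfl).2
        have := perm1 (p := rank Y) (q := rank X) (t := rank Z) (rank_lt g c k)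
        rw [rev3 (rank X) (rank Y) (rank Z)] at this
        exact this
      calc eqVal X Y ⊓ eqVal Y Z ⊓ c k
          = eqVal X Y ⊓ (eqVal Y Z ⊓ c k) := by ac_rfl
        _ ≤ eqVal X Y ⊓ memVal (g k) Y := inf_le_inf_left _ h1
        _ = eqVal Y X ⊓ memVal (g k) Y := by rw [eqVal_symm]
        _ ≤ memVal (g k) X := h2
  · -- substitution in the container
    rw [hX, memVal_mk, ← hX]
    rw [inf_iSup_eq]
    refine iSup_le fun i => ?_
    have step : eqVal X Y ⊓ (a i ⊓ eqVal (e i) Z) ≤ memVal (e i) Y ⊓ eqVal (e i) Z := by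
      calc eqVal X Y ⊓ (a i ⊓ eqVal (e i) Z) = (eqVal X Y ⊓ a i) ⊓ eqVal (e i) Z := by ac_rfl
        _ ≤ memVal (e i) Y ⊓ eqVal (e i) Z := inf_le_inf_right _ (hmemY i)
    refine le_trans step ?_
    rw [hY, memVal_mk, ← hY, iSup_inf_eq]
    refine iSup_le fun j => ?_
    have h2 : eqVal (f j) (e i) ⊓ eqVal (e i) Z ≤ eqVal (f j) Z := by
      refine (IH _ ?_ (f j) (e i) Z rfl).1
      exact dm_two (r := rank Z) (rank_lt e a i) (rank_lt f b j)
    calc b j ⊓ eqVal (f j) (e i) ⊓ eqVal (e i) Z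
        = b j ⊓ (eqVal (f j) (e i) ⊓ eqVal (e i) Z) := by ac_rfl
      _ ≤ b j ⊓ eqVal (f j) Z := inf_le_inf_left _ h2
      _ ≤ memVal Z Y := by rw [hY, memVal_mk]; exact le_iSup (fun j => b j ⊓ eqVal (f j) Z) j

end HName
namespace HName
variable {A : Type u} [Order.Frame A]

theorem eqVal_trans (x y z : HName A) : eqVal x y ⊓ eqVal y z ≤ eqVal x z :=
  (trans_subst _ x y z rfl).1

theorem subst_container (x y z : HName A) : eqVal x y ⊓ memVal z x ≤ memVal z y :=
  (trans_subst _ x y z rfl).2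

theorem subst_member (x y z : HName A) : eqVal x y ⊓ memVal x z ≤ memVal y z := by
  obtain ⟨μ, g, c⟩ := z
  rw [memVal_mk, memVal_mk, inf_iSup_eq]
  refine iSup_le fun k => ?_
  calc eqVal x y ⊓ (c k ⊓ eqVal (g k) x) = c k ⊓ (eqVal (g k) x ⊓ eqVal x y) := by ac_rfl
    _ ≤ c k ⊓ eqVal (g k) y := inf_le_inf_left _ (eqVal_trans _ _ _)
    _ ≤ ⨆ k, c k ⊓ eqVal (g k) y := le_iSup (fun k => c k ⊓ eqVal (g k) y) k

/-- The Russell-style collapse: no name can contain all names. -/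
theorem iInf_memVal_eq_bot (u : HName A) : (⨅ v : HName A, memVal v u) = ⊥ := by
  obtain ⟨ι, e, a⟩ := u
  set b : A := ⨅ v : HName A, memVal v (mk ι e a) with hb
  set r : HName A := mk ι e (fun i => b ⊓ (memVal (e i) (e i) ⇨ ⊥)) with hr
  have hmemr : ∀ x : HName A,
      memVal x r = ⨆ i, (b ⊓ (memVal (e i) (e i) ⇨ ⊥)) ⊓ eqVal (e i) x := fun _ => rfl
  -- equality with a domain element transfers self-membership to `r`
  have key1 : ∀ i, eqVal (e i) r ⊓ memVal (e i) (e i) ≤ memVal r r := fun i =>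
    calc eqVal (e i) r ⊓ memVal (e i) (e i)
        ≤ eqVal (e i) r ⊓ (eqVal (e i) r ⊓ memVal (e i) (e i)) :=
          le_inf inf_le_left le_rfl
      _ ≤ eqVal (e i) r ⊓ memVal r (e i) := inf_le_inf_left _ (subst_member _ _ _)
      _ ≤ memVal r r := subst_container _ _ _
  -- and conversely
  have key1' : ∀ i, eqVal (e i) r ⊓ memVal r r ≤ memVal (e i) (e i) := fun i =>
    calc eqVal (e i) r ⊓ memVal r r
        ≤ eqVal r (e i) ⊓ (eqVal r (e i) ⊓ memVal r r) := by
          rw [eqVal_symm]; exact le_inf inf_le_left le_rfl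
      _ ≤ eqVal r (e i) ⊓ memVal r (e i) := inf_le_inf_left _ (subst_container _ _ _)
      _ ≤ memVal (e i) (e i) := subst_member _ _ _
  -- `‖r ∈ r‖ = ⊥`
  have hrr : memVal r r = ⊥ := by
    rw [← le_bot_iff]
    nth_rewrite 1 [← inf_idem (memVal r r)]
    nth_rewrite 2 [hmemr r]
    rw [inf_iSup_eq]
    refine iSup_le fun i => ?_
    calc memVal r r ⊓ ((b ⊓ (memVal (e i) (e i) ⇨ ⊥)) ⊓ eqVal (e i) r)
        ≤ (memVal (e i) (e i) ⇨ ⊥) ⊓ (eqVal (e i) r ⊓ memVal r r) := by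
          refine le_inf ?_ (le_inf ?_ ?_) <;>
            [exact inf_le_of_right_le (inf_le_of_left_le inf_le_right);
             exact inf_le_of_right_le inf_le_right; exact inf_le_left]
      _ ≤ (memVal (e i) (e i) ⇨ ⊥) ⊓ memVal (e i) (e i) := inf_le_inf_left _ (key1' i)
      _ ≤ ⊥ := himp_inf_le
  -- conclude `b = ⊥`
  have hbr : ∀ i, b ⊓ eqVal (e i) r ≤ memVal r r := by
    intro i
    have h1 : b ⊓ eqVal (e i) r ≤ memVal (e i) (e i) ⇨ ⊥ := by
      rw [le_himp_iff]
      calc b ⊓ eqVal (e i) r ⊓ memVal (e i) (e i)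
          ≤ eqVal (e i) r ⊓ memVal (e i) (e i) :=
            inf_le_inf_right _ inf_le_right
        _ ≤ memVal r r := key1 i
        _ = ⊥ := hrr
    calc b ⊓ eqVal (e i) r
        ≤ (b ⊓ (memVal (e i) (e i) ⇨ ⊥)) ⊓ eqVal (e i) r :=
          le_inf (le_inf inf_le_left h1) inf_le_right
      _ ≤ memVal r r := by
          rw [hmemr r]
          exact le_iSup (fun i => b ⊓ (memVal (e i) (e i) ⇨ ⊥) ⊓ eqVal (e i) r) i
  have hbbot : b ≤ ⊥ := by
    have h2 : b ≤ memVal r (mk ι e a) := iInf_le _ r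
    rw [memVal_mk] at h2
    calc b ≤ b ⊓ ⨆ i, a i ⊓ eqVal (e i) r := le_inf le_rfl h2
      _ = ⨆ i, b ⊓ (a i ⊓ eqVal (e i) r) := inf_iSup_eq _ _
      _ ≤ ⊥ := by
          refine iSup_le fun i => ?_
          calc b ⊓ (a i ⊓ eqVal (e i) r) ≤ b ⊓ eqVal (e i) r :=
                inf_le_inf_left _ inf_le_right
            _ ≤ memVal r r := hbr i
            _ = ⊥ := hrr
  exact le_bot_iff.1 hbbot

end HName

open HName in
/-- Failure of Comprehension: for every complete Heyting algebra `A` with `0 ≠ 1`,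
the truth value `‖∃x∀y(y ∈ x)‖ = ⨆_{u ∈ V^A} ⨅_{v ∈ V^A} ‖v ∈ u‖` of the sentence
asserting the existence of a universal set is `0`; hence the unrestricted
Comprehension scheme is not valid in `V^A`. -/
theorem comprehension_fails {A : Type u} [Order.Frame A] (h : (⊥ : A) ≠ ⊤) :
    (⨆ u : HName A, ⨅ v : HName A, memVal v u) = ⊥ ∧
      (⨆ u : HName A, ⨅ v : HName A, memVal v u) ≠ ⊤ := by
  have h1 : (⨆ u : HName A, ⨅ v : HName A, memVal v u) = ⊥ := by
    simp [iInf_memVal_eq_bot]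
  exact ⟨h1, h1 ▸ h⟩
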